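/- arXiv:0806.4686 — 3 statements merged into one kernel-verified Lean document; each statement's English description precedes it below -/
import Mathlib

section
/- One-step regret bound for truncated gradient: Let L(·, z) be convex with ‖∇₁L(w,z)‖² ≤ A·L(w,z) + B for all w. Let w' = T₁(w - η∇₁L(w,z), gη, θ) with η > 0, g ≥ 0, gη ≤ θ. Then for all w̄ ∈ ℝᵈ: (1 - 0.5Aη)·L(w,z) + g·‖w'·I(|w'| ≤ θ)‖₁ ≤ L(w̄,z) + g·‖w̄·I(|w'| ≤ θ)‖₁ + (η/2)·B + (‖w̄ - w‖² - ‖w̄ - w'‖²)/(2η). -/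
open Finset

/-- Truncation operator with threshold `θ` and shrinkage `α`. -/
noncomputable def T1 (v α θ : ℝ) : ℝ :=
  if 0 ≤ v ∧ v ≤ θ then max 0 (v - α)
  else if -θ ≤ v ∧ v ≤ 0 then min 0 (v + α)
  else v

lemma T1_key (α θ u wb : ℝ) (hα : 0 ≤ α) (hαθ : α ≤ θ) :
    (wb - T1 u α θ)^2 + 2*α*(|T1 u α θ| * (if |T1 u α θ| ≤ θ then (1:ℝ) else 0))
      ≤ (wb - u)^2 + 2*α*(|wb| * (if |T1 u α θ| ≤ θ then (1:ℝ) else 0)) := by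
  unfold T1
  split_ifs with h1 h2 h3 h4 h5
  · obtain ⟨hu0, huθ⟩ := h1
    rcases le_total u α with hc | hc
    · rw [max_eq_left (by linarith)]
      simp only [abs_zero]
      nlinarith [le_abs_self wb, abs_nonneg wb]
    · rw [max_eq_right (by linarith)]
      rw [abs_of_nonneg (by linarith : (0:ℝ) ≤ u - α)]
      nlinarith [le_abs_self wb, abs_nonneg wb]
  · exfalso
    have h0 : (0:ℝ) ≤ max 0 (u - α) := le_max_left _ _
    have h3 : max 0 (u - α) ≤ θ := max_le (by linarith) (by linarith [h1.2])
    rw [abs_of_nonneg h0] at h2; exact h2 h3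
  · obtain ⟨huθ, hu0⟩ := h3
    rcases le_total (-α) u with hc | hc
    · rw [min_eq_left (by linarith)]
      simp only [abs_zero]
      nlinarith [neg_abs_le wb, abs_nonneg wb]
    · rw [min_eq_right (by linarith)]
      rw [abs_of_nonpos (by linarith : u + α ≤ 0)]
      nlinarith [neg_abs_le wb, abs_nonneg wb]
  · exfalso
    have h0 : min 0 (u + α) ≤ 0 := min_le_left _ _
    have h6 : -θ ≤ min 0 (u + α) := le_min (by linarith) (by linarith [h3.1])
    rw [abs_of_nonpos h0] at h4; linarith
  · exfalso
    push_neg at h1 h3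
    rcases le_or_gt 0 u with hc | hc
    · have := h1 hc
      rw [abs_of_nonneg hc] at h5; linarith
    · have := h3 (by rw [abs_of_neg hc] at h5; linarith)
      linarith
  · nlinarith [abs_nonneg u, abs_nonneg wb]

/-- One-step regret bound for the truncated gradient update (Lemma 5). -/
theorem truncated_gradient_one_step (d : ℕ) (L : (Fin d → ℝ) → ℝ)
    (A B η g θ : ℝ) (hA : 0 ≤ A) (hB : 0 ≤ B) (hη : 0 < η) (hg : 0 ≤ g)
    (hgθ : g * η ≤ θ)
    (w grad : Fin d → ℝ)
    (hsub : ∀ v : Fin d → ℝ, ∑ j, (v j - w j) * grad j ≤ L v - L w)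
    (hgrad : ∑ j, (grad j) ^ 2 ≤ A * L w + B)
    (w' : Fin d → ℝ) (hw' : ∀ j, w' j = T1 (w j - η * grad j) (g * η) θ)
    (wbar : Fin d → ℝ) :
    (1 - 0.5 * A * η) * L w
        + g * ∑ j, |w' j| * (if |w' j| ≤ θ then (1 : ℝ) else 0)
      ≤ L wbar + g * ∑ j, |wbar j| * (if |w' j| ≤ θ then (1 : ℝ) else 0)
        + (η / 2) * B
        + ((∑ j, (wbar j - w j) ^ 2) - ∑ j, (wbar j - w' j) ^ 2) / (2 * η) := by
  have hkey : ∀ j, (wbar j - w' j)^2 + 2*(g*η)*(|w' j| * (if |w' j| ≤ θ then (1:ℝ) else 0))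
      ≤ (wbar j - w j)^2 + 2*η*((wbar j - w j) * grad j) + η^2*(grad j)^2
        + 2*(g*η)*(|wbar j| * (if |w' j| ≤ θ then (1:ℝ) else 0)) := by
    intro j
    have h := T1_key (g*η) θ (w j - η * grad j) (wbar j) (by positivity) hgθ
    rw [← hw' j] at h
    nlinarith [h]
  have hsum := Finset.sum_le_sum (fun j (_ : j ∈ Finset.univ) => hkey j)
  simp only [Finset.sum_add_distrib, ← Finset.mul_sum] at hsum
  have h1 : 2*η*(∑ j, (wbar j - w j) * grad j) ≤ 2*η*(L wbar - L w) :=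
    mul_le_mul_of_nonneg_left (hsub wbar) (by positivity)
  have h2 : η^2*(∑ j, (grad j)^2) ≤ η^2*(A * L w + B) :=
    mul_le_mul_of_nonneg_left hgrad (by positivity)
  have hD : ((∑ j, (wbar j - w j) ^ 2) - ∑ j, (wbar j - w' j) ^ 2) / (2 * η) * (2 * η)
      = (∑ j, (wbar j - w j) ^ 2) - ∑ j, (wbar j - w' j) ^ 2 :=
    div_mul_cancel₀ _ (by positivity)
  nlinarith [hsum, h1, h2, hD, hη]
end

section
/- Stochastic regularized regret bound (Theorem 3): with training data z₁,…,z_n, R(w, g) = (1/n)Σᵢ L(w, zᵢ) + g‖w‖₁, updates w_{t+1} = T(w_t - η∇₁L(w_t, z_{i_t}), gη) with w₁ = 0 and i_t uniform on {1,…,n}, and under the gradient-bound assumption with Aη < 2, for all w̄: E[(1-0.5Aη)/T · Σ_{t=1}^T R(w_t, g/(1-0.5Aη))] ≤ (η/2)B + ‖w̄‖²/(2ηT) + R(w̄, g). -/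
open Finset

/-- Soft-truncation operator (`T₁` with `θ = ∞`). -/
noncomputable def T (v α : ℝ) : ℝ := if v > 0 then max 0 (v - α) else min 0 (v + α)

/-- The prox property of soft truncation: `T v α` minimizes `½(x - v)² + α|x|`,
which yields this variational inequality. -/
lemma T_prox (v α x : ℝ) (hα : 0 ≤ α) :
    (x - T v α) * (v - T v α) ≤ α * (|x| - |T v α|) := by
  have h1 := le_abs_self x
  have h2 := neg_abs_le x
  have h3 := abs_nonneg x
  unfold T
  split_ifs with h
  · rcases le_total (v - α) 0 with h4 | h4
    · rw [max_eq_left h4]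
      simp only [sub_zero, abs_zero]
      nlinarith [mul_nonneg (by linarith : (0:ℝ) ≤ |x| - x) (le_of_lt h),
        mul_nonneg h3 (by linarith : (0:ℝ) ≤ α - v)]
    · rw [max_eq_right h4, abs_of_nonneg h4]
      nlinarith [mul_nonneg hα (by linarith : (0:ℝ) ≤ |x| - x)]
  · push_neg at h
    rcases le_total 0 (v + α) with h4 | h4
    · rw [min_eq_left h4]
      simp only [sub_zero, abs_zero]
      nlinarith [mul_nonneg (by linarith : (0:ℝ) ≤ |x| + x) (by linarith : (0:ℝ) ≤ -v),
        mul_nonneg h3 (by linarith : (0:ℝ) ≤ α + v)]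
    · rw [min_eq_right h4, abs_of_nonpos h4]
      nlinarith [mul_nonneg hα (by linarith : (0:ℝ) ≤ |x| + x)]

/-- One-step deterministic inequality for the truncated gradient update (×2η). -/
lemma step_ineq (d n : ℕ) (L : Fin n → (Fin d → ℝ) → ℝ)
    (gradL : (Fin d → ℝ) → Fin n → Fin d → ℝ)
    (A B η g : ℝ) (hη : 0 < η) (hg : 0 ≤ g)
    (hsub : ∀ (u v : Fin d → ℝ) (i : Fin n),
      ∑ j, (v j - u j) * gradL u i j ≤ L i v - L i u)
    (hgrad : ∀ (u : Fin d → ℝ) (i : Fin n),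
      ∑ j, (gradL u i j) ^ 2 ≤ A * L i u + B)
    (u wbar w' : Fin d → ℝ) (i : Fin n)
    (hw' : ∀ j, w' j = T (u j - η * gradL u i j) (g * η)) :
    2*η*(1 - A*η/2) * L i u + 2*g*η * ∑ j, |w' j| + ∑ j, (wbar j - w' j)^2
      ≤ 2*η * L i wbar + 2*g*η * ∑ j, |wbar j| + ∑ j, (wbar j - u j)^2 + η^2*B := by
  have hj : ∀ j, (wbar j - w' j)^2 + 2*g*η*|w' j|
      ≤ (wbar j - u j)^2 + 2*g*η*|wbar j|
        + 2*η*((wbar j - u j) * gradL u i j) + η^2*(gradL u i j)^2 := by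
    intro j
    have hp := T_prox (u j - η * gradL u i j) (g*η) (wbar j) (by positivity)
    rw [← hw' j] at hp
    nlinarith [sq_nonneg (u j - w' j - η * gradL u i j)]
  have hS : ∑ j, ((wbar j - w' j)^2 + 2*g*η*|w' j|)
      ≤ ∑ j, ((wbar j - u j)^2 + 2*g*η*|wbar j|
        + 2*η*((wbar j - u j) * gradL u i j) + η^2*(gradL u i j)^2) :=
    Finset.sum_le_sum fun j _ => hj j
  simp only [Finset.sum_add_distrib, ← Finset.mul_sum] at hS
  have h1 : 2*η*∑ j, (wbar j - u j) * gradL u i j ≤ 2*η*(L i wbar - L i u) :=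
    mul_le_mul_of_nonneg_left (hsub u wbar i) (by positivity)
  have h2 : η^2*∑ j, (gradL u i j)^2 ≤ η^2*(A * L i u + B) :=
    mul_le_mul_of_nonneg_left (hgrad u i) (sq_nonneg η)
  linarith

/-- Stochastic regularized regret bound (Theorem 3).  The draws `σ : Fin Tn → Fin n` are
i.i.d. uniform, so the expectation is the average over all `n^Tn` draw sequences.
`gradL u i` is a subgradient of `L i` at `u`; starting from `w σ 0 = 0`, the iterates
follow the truncated gradient update driven by the draws `σ`. -/
theorem stochastic_regularized_regret (d n Tn : ℕ) (hn : 0 < n) (hT : 0 < Tn)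
    (L : Fin n → (Fin d → ℝ) → ℝ)
    (gradL : (Fin d → ℝ) → Fin n → Fin d → ℝ)
    (A B η g : ℝ) (hA : 0 ≤ A) (hB : 0 ≤ B) (hη : 0 < η) (hAη : A * η < 2)
    (hg : 0 ≤ g)
    (hsub : ∀ (u v : Fin d → ℝ) (i : Fin n),
      ∑ j, (v j - u j) * gradL u i j ≤ L i v - L i u)
    (hgrad : ∀ (u : Fin d → ℝ) (i : Fin n),
      ∑ j, (gradL u i j) ^ 2 ≤ A * L i u + B)
    (R : (Fin d → ℝ) → ℝ → ℝ)
    (hR : ∀ u c, R u c = (1 / n) * ∑ i, L i u + c * ∑ j, |u j|)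
    (w : (Fin Tn → Fin n) → ℕ → Fin d → ℝ)
    (hw0 : ∀ σ j, w σ 0 j = 0)
    (hupdate : ∀ (σ : Fin Tn → Fin n) (t : Fin Tn) (j : Fin d),
      w σ (t + 1) j = T (w σ t j - η * gradL (w σ t) (σ t) j) (g * η))
    (wbar : Fin d → ℝ) :
    (∑ σ : Fin Tn → Fin n,
        (1 - 0.5 * A * η) / Tn *
          ∑ t ∈ Finset.range Tn, R (w σ t) (g / (1 - 0.5 * A * η))) / (n ^ Tn)
      ≤ (η / 2) * B + (∑ j, (wbar j) ^ 2) / (2 * η * Tn) + R wbar g := by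
  -- `w σ t` only depends on the draws before time `t`
  have hindep : ∀ t : ℕ, t ≤ Tn → ∀ σ σ' : Fin Tn → Fin n,
      (∀ s : Fin Tn, (s:ℕ) < t → σ s = σ' s) → w σ t = w σ' t := by
    intro t
    induction t with
    | zero => intro _ σ σ' _; funext j; rw [hw0, hw0]
    | succ t ih =>
      intro ht σ σ' hag
      have htT : t < Tn := ht
      have hwt : w σ t = w σ' t :=
        ih (Nat.le_of_lt htT) σ σ' (fun s hs => hag s (Nat.lt_succ_of_lt hs))
      funext j
      calc w σ (t+1) j
          = T (w σ t j - η * gradL (w σ t) (σ ⟨t,htT⟩) j) (g*η) := hupdate σ ⟨t,htT⟩ j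
        _ = T (w σ' t j - η * gradL (w σ' t) (σ' ⟨t,htT⟩) j) (g*η) := by
            rw [hwt, hag ⟨t,htT⟩ (Nat.lt_succ_self t)]
        _ = w σ' (t+1) j := (hupdate σ' ⟨t,htT⟩ j).symm
  -- resampling identity: if `W σ` does not depend on the draw at time `t`, then the
  -- sampled loss at time `t` averages to the full empirical loss
  have stoch : ∀ (t : Fin Tn) (W : (Fin Tn → Fin n) → Fin d → ℝ),
      (∀ σ i, W (Function.update σ t i) = W σ) →
      (n:ℝ) * ∑ σ : Fin Tn → Fin n, L (σ t) (W σ)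
        = ∑ σ : Fin Tn → Fin n, ∑ i, L i (W σ) := by
    intro t W hW
    have hinv : Function.Involutive
        (fun p : (Fin Tn → Fin n) × Fin n => (Function.update p.1 t p.2, p.1 t)) := by
      intro p
      simp [Function.update_idem, Function.update_eq_self, Function.update_self]
    have key : ∑ p : (Fin Tn → Fin n) × Fin n, L p.2 (W p.1)
        = ∑ p : (Fin Tn → Fin n) × Fin n, L (p.1 t) (W p.1) := by
      rw [← Equiv.sum_comp hinv.toPerm (fun p : (Fin Tn → Fin n) × Fin n => L p.2 (W p.1))]
      apply Finset.sum_congr rfl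
      intro p _
      simp [Function.Involutive.coe_toPerm, hW]
    calc (n:ℝ) * ∑ σ : Fin Tn → Fin n, L (σ t) (W σ)
        = ∑ σ : Fin Tn → Fin n, ∑ _i : Fin n, L (σ t) (W σ) := by
          rw [Finset.mul_sum]
          exact Finset.sum_congr rfl fun σ _ => by
            rw [Finset.sum_const, Finset.card_univ, Fintype.card_fin, nsmul_eq_mul]
      _ = ∑ p : (Fin Tn → Fin n) × Fin n, L (p.1 t) (W p.1) :=
          (Fintype.sum_prod_type' (f := fun σ _i => L (σ t) (W σ))).symm
      _ = ∑ p : (Fin Tn → Fin n) × Fin n, L p.2 (W p.1) := key.symm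
      _ = ∑ σ : Fin Tn → Fin n, ∑ i, L i (W σ) :=
          Fintype.sum_prod_type' (f := fun σ i => L i (W σ))
  -- per-draw-sequence regret bound by telescoping the one-step inequality
  have key : ∀ σ : Fin Tn → Fin n,
      2*η*(∑ t : Fin Tn, ((1 - 0.5*A*η) * L (σ t) (w σ ↑t) + g * ∑ j, |w σ ↑t j|))
        ≤ 2*η*(∑ t : Fin Tn, L (σ t) wbar)
          + (↑Tn*(2*g*η*(∑ j, |wbar j|) + η^2*B) + ∑ j, (wbar j)^2) := by
    intro σ
    have hstep : ∀ t : Fin Tn,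
        2*η*((1 - 0.5*A*η) * L (σ t) (w σ ↑t) + g * ∑ j, |w σ ↑t j|)
          ≤ 2*η * L (σ t) wbar
            + ((2*g*η*(∑ j, |wbar j|) + η^2*B)
              + ((2*g*η*(∑ j, |w σ ↑t j|) + ∑ j, (wbar j - w σ ↑t j)^2)
                - (2*g*η*(∑ j, |w σ (↑t+1) j|) + ∑ j, (wbar j - w σ (↑t+1) j)^2))) := by
      intro t
      have h := step_ineq d n L gradL A B η g hη hg hsub hgrad
        (w σ ↑t) wbar (w σ (↑t+1)) (σ t) (fun j => hupdate σ t j)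
      linarith
    have hsum2 := Finset.sum_le_sum fun t (_ : t ∈ (univ : Finset (Fin Tn))) => hstep t
    rw [Finset.sum_add_distrib] at hsum2
    have htele : ∑ t : Fin Tn, ((2*g*η*(∑ j, |wbar j|) + η^2*B)
          + ((2*g*η*(∑ j, |w σ ↑t j|) + ∑ j, (wbar j - w σ ↑t j)^2)
            - (2*g*η*(∑ j, |w σ (↑t+1) j|) + ∑ j, (wbar j - w σ (↑t+1) j)^2)))
        = ↑Tn * (2*g*η*(∑ j, |wbar j|) + η^2*B)
          + ((2*g*η*(∑ j, |w σ 0 j|) + ∑ j, (wbar j - w σ 0 j)^2)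
            - (2*g*η*(∑ j, |w σ Tn j|) + ∑ j, (wbar j - w σ Tn j)^2)) := by
      rw [Fin.sum_univ_eq_sum_range (fun s => (2*g*η*(∑ j, |wbar j|) + η^2*B)
          + ((2*g*η*(∑ j, |w σ s j|) + ∑ j, (wbar j - w σ s j)^2)
            - (2*g*η*(∑ j, |w σ (s+1) j|) + ∑ j, (wbar j - w σ (s+1) j)^2))) Tn]
      rw [Finset.sum_add_distrib, Finset.sum_const, Finset.card_range, nsmul_eq_mul,
        Finset.sum_range_sub' (fun s => 2*g*η*(∑ j, |w σ s j|)
          + ∑ j, (wbar j - w σ s j)^2) Tn]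
    rw [htele] at hsum2
    have h0a : ∑ j, (wbar j - w σ 0 j)^2 = ∑ j, (wbar j)^2 :=
      Finset.sum_congr rfl fun j _ => by rw [hw0]; ring
    have h0b : (∑ j : Fin d, |w σ 0 j|) = 0 :=
      Finset.sum_eq_zero fun j _ => by rw [hw0]; exact abs_zero
    rw [h0a, h0b] at hsum2
    have hF : 0 ≤ 2*g*η*(∑ j, |w σ Tn j|) + ∑ j, (wbar j - w σ Tn j)^2 := by positivity
    rw [Finset.mul_sum, Finset.mul_sum]
    linarith
  -- now take the expectation over the draws
  have hc : (0:ℝ) < 1 - 0.5 * A * η := by nlinarith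
  have hn' : (0:ℝ) < n := by exact_mod_cast hn
  have hTr : (0:ℝ) < (Tn:ℝ) := by exact_mod_cast hT
  have hP : (0:ℝ) < (n:ℝ)^Tn := by positivity
  have hcard : (Fintype.card (Fin Tn → Fin n) : ℝ) = (n:ℝ)^Tn := by
    simp [Fintype.card_fun]
  have hWind : ∀ (t : Fin Tn) (σ : Fin Tn → Fin n) (i : Fin n),
      w (Function.update σ t i) ↑t = w σ ↑t := by
    intro t σ i
    apply hindep ↑t (le_of_lt t.isLt)
    intro s hs
    apply Function.update_of_ne
    intro hst
    subst hst
    exact lt_irrefl _ hs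
  have stoch_w : ∀ t : Fin Tn,
      (n:ℝ) * ∑ σ : Fin Tn → Fin n, L (σ t) (w σ ↑t)
        = ∑ σ : Fin Tn → Fin n, ∑ i, L i (w σ ↑t) :=
    fun t => stoch t (fun σ => w σ ↑t) (fun σ i => hWind t σ i)
  set S : ℝ := ∑ σ : Fin Tn → Fin n, ∑ t : Fin Tn,
      ((1 - 0.5*A*η) * L (σ t) (w σ ↑t) + g * ∑ j, |w σ ↑t j|) with hSdef
  have claim1 : ∑ σ : Fin Tn → Fin n, ∑ t : Fin Tn,
      ((1 - 0.5*A*η) * ((1/(n:ℝ)) * ∑ i, L i (w σ ↑t)) + g * ∑ j, |w σ ↑t j|) = S := by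
    rw [hSdef, Finset.sum_comm]
    conv_rhs => rw [Finset.sum_comm]
    apply Finset.sum_congr rfl
    intro t _
    rw [Finset.sum_add_distrib, Finset.sum_add_distrib]
    congr 1
    rw [← Finset.mul_sum, ← Finset.mul_sum]
    congr 1
    rw [← Finset.mul_sum, ← stoch_w t]
    field_simp
  have hbar : (∑ σ : Fin Tn → Fin n, ∑ t : Fin Tn, L (σ t) wbar)
      = ↑Tn * ((n:ℝ)^Tn * ((1/(n:ℝ)) * ∑ i, L i wbar)) := by
    rw [Finset.sum_comm]
    have h1 : ∀ t : Fin Tn, (∑ σ : Fin Tn → Fin n, L (σ t) wbar)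
        = (n:ℝ)^Tn * ((1/(n:ℝ)) * ∑ i, L i wbar) := by
      intro t
      have h : (n:ℝ) * ∑ σ : Fin Tn → Fin n, L (σ t) wbar
          = ∑ σ : Fin Tn → Fin n, ∑ i, L i wbar := stoch t (fun _ => wbar) (fun _ _ => rfl)
      have h2 : (∑ _σ : Fin Tn → Fin n, ∑ i, L i wbar) = (n:ℝ)^Tn * ∑ i, L i wbar := by
        rw [Finset.sum_const, Finset.card_univ, nsmul_eq_mul, hcard]
      rw [h2] at h
      field_simp at h ⊢
      linarith
    rw [Finset.sum_congr rfl (fun t _ => h1 t), Finset.sum_const, Finset.card_univ,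
      Fintype.card_fin, nsmul_eq_mul]
  have claim2 : 2*η*S ≤ 2*η*(↑Tn * ((n:ℝ)^Tn * ((1/(n:ℝ)) * ∑ i, L i wbar)))
      + (n:ℝ)^Tn * (↑Tn*(2*g*η*(∑ j, |wbar j|) + η^2*B) + ∑ j, (wbar j)^2) := by
    have hσ := Finset.sum_le_sum fun σ (_ : σ ∈ (univ : Finset (Fin Tn → Fin n))) => key σ
    rw [Finset.sum_add_distrib, Finset.sum_const, Finset.card_univ, nsmul_eq_mul, hcard,
      ← Finset.mul_sum, ← Finset.mul_sum, hbar] at hσ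
    rw [hSdef]
    exact hσ
  have hRrw : ∀ σ : Fin Tn → Fin n,
      (1 - 0.5 * A * η) / ↑Tn * ∑ t ∈ Finset.range Tn, R (w σ t) (g / (1 - 0.5 * A * η))
        = (1/(Tn:ℝ)) * ∑ t : Fin Tn,
          ((1 - 0.5*A*η) * ((1/(n:ℝ)) * ∑ i, L i (w σ ↑t)) + g * ∑ j, |w σ ↑t j|) := by
    intro σ
    rw [Fin.sum_univ_eq_sum_range (fun s =>
      (1 - 0.5*A*η) * ((1/(n:ℝ)) * ∑ i, L i (w σ s)) + g * ∑ j, |w σ s j|) Tn]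
    rw [Finset.mul_sum, Finset.mul_sum]
    apply Finset.sum_congr rfl
    intro t _
    rw [hR]
    field_simp
  have hLHS : (∑ σ : Fin Tn → Fin n,
      (1 - 0.5 * A * η) / ↑Tn * ∑ t ∈ Finset.range Tn, R (w σ t) (g / (1 - 0.5 * A * η)))
      = S / ↑Tn := by
    rw [Finset.sum_congr rfl (fun σ _ => hRrw σ), ← Finset.mul_sum, claim1]
    ring
  rw [hLHS, div_div, div_le_iff₀ (by positivity : (0:ℝ) < ↑Tn * (n:ℝ)^Tn), hR wbar g]
  have h2η : (0:ℝ) < 2*η := by linarith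
  rw [← mul_le_mul_iff_of_pos_left h2η]
  calc 2*η*S ≤ 2*η*(↑Tn * ((n:ℝ)^Tn * ((1/(n:ℝ)) * ∑ i, L i wbar)))
      + (n:ℝ)^Tn * (↑Tn*(2*g*η*(∑ j, |wbar j|) + η^2*B) + ∑ j, (wbar j)^2) := claim2
    _ = 2*η*((η/2*B + (∑ j, (wbar j)^2)/(2*η*↑Tn)
        + ((1/(n:ℝ)) * ∑ i, L i wbar + g * ∑ j, |wbar j|)) * (↑Tn * (n:ℝ)^Tn)) := by
      field_simp
      ring
end

section
/- The one-step inner-product bound: let w' = T₁(ṽ, gη, θ) coordinatewise, with 0 ≤ gη ≤ θ. Then for any w̄ ∈ ℝᵈ, -(w̄ - w')ᵀ(w' - ṽ) ≤ gη·[Σⱼ |w̄ⱼ|·I(|w'ⱼ| ≤ θ) - Σⱼ |w'ⱼ|·I(|w'ⱼ| ≤ θ)]. -/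
open Finset

/-- One-step inner-product bound used in the proof of Lemma 5. -/
theorem one_step_inner_product_bound (d : ℕ) (g η θ : ℝ)
    (hg : 0 ≤ g) (hη : 0 ≤ η) (hgθ : g * η ≤ θ)
    (vt w' : Fin d → ℝ) (hw' : ∀ j, w' j = T1 (vt j) (g * η) θ)
    (wbar : Fin d → ℝ) :
    -(∑ j, (wbar j - w' j) * (w' j - vt j))
      ≤ g * η * ((∑ j, |wbar j| * (if |w' j| ≤ θ then (1 : ℝ) else 0))
          - ∑ j, |w' j| * (if |w' j| ≤ θ then (1 : ℝ) else 0)) := by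
  have hα0 : 0 ≤ g * η := mul_nonneg hg hη
  have hθ : 0 ≤ θ := le_trans hα0 hgθ
  have key : ∀ j, -((wbar j - w' j) * (w' j - vt j))
      ≤ g * η * (|wbar j| * (if |w' j| ≤ θ then (1 : ℝ) else 0)
        - |w' j| * (if |w' j| ≤ θ then (1 : ℝ) else 0)) := by
    intro j
    rw [hw' j]
    unfold T1
    set α := g * η with hα
    set v := vt j with hv
    set b := wbar j with hb
    by_cases h1 : 0 ≤ v ∧ v ≤ θ
    · rw [if_pos h1]
      have habs : |max 0 (v - α)| ≤ θ := by
        rw [abs_of_nonneg (le_max_left _ _)]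
        exact max_le hθ (by linarith [h1.2])
      rw [if_pos habs]
      rcases le_or_gt α v with hc | hc
      · rw [max_eq_right (by linarith), abs_of_nonneg (show (0:ℝ) ≤ v - α by linarith)]
        nlinarith [le_abs_self b]
      · rw [max_eq_left (by linarith)]
        simp only [abs_zero]
        have h5 : b * v ≤ |b| * v := by
          calc b * v ≤ |b * v| := le_abs_self _
            _ = |b| * |v| := abs_mul b v
            _ = |b| * v := by rw [abs_of_nonneg h1.1]
        have h6 : |b| * v ≤ |b| * α := mul_le_mul_of_nonneg_left (le_of_lt hc) (abs_nonneg b)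
        nlinarith
    · rw [if_neg h1]
      by_cases h2 : -θ ≤ v ∧ v ≤ 0
      · rw [if_pos h2]
        have habs : |min 0 (v + α)| ≤ θ := by
          rw [abs_of_nonpos (min_le_left _ _), neg_le]
          exact le_min (by linarith) (by linarith [h2.1])
        rw [if_pos habs]
        rcases le_or_gt v (-α) with hc | hc
        · rw [min_eq_right (by linarith), abs_of_nonpos (show v + α ≤ 0 by linarith)]
          nlinarith [neg_abs_le b]
        · rw [min_eq_left (by linarith)]
          simp only [abs_zero]
          have h5 : b * v ≤ |b| * (-v) := by
            calc b * v ≤ |b * v| := le_abs_self _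
              _ = |b| * |v| := abs_mul b v
              _ = |b| * (-v) := by rw [abs_of_nonpos h2.2]
          have h6 : |b| * (-v) ≤ |b| * α := mul_le_mul_of_nonneg_left (by linarith) (abs_nonneg b)
          nlinarith
      · rw [if_neg h2]
        have habs : ¬ |v| ≤ θ := by
          push_neg at h1 h2
          rcases le_or_gt 0 v with hc | hc
          · rw [abs_of_nonneg hc]; intro h; exact absurd (h1 hc) (not_lt.2 h)
          · rw [abs_of_neg hc]; intro h
            have := h2 (by linarith)
            linarith
        rw [if_neg habs]
        simp
  calc -(∑ j, (wbar j - w' j) * (w' j - vt j))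
      = ∑ j, -((wbar j - w' j) * (w' j - vt j)) := by rw [Finset.sum_neg_distrib]
    _ ≤ ∑ j, g * η * (|wbar j| * (if |w' j| ≤ θ then (1 : ℝ) else 0)
        - |w' j| * (if |w' j| ≤ θ then (1 : ℝ) else 0)) :=
        Finset.sum_le_sum fun j _ => key j
    _ = _ := by rw [← Finset.mul_sum, Finset.sum_sub_distrib]
end
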